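/- Let (Ω, P) be a probability space and let X : Ω → ℝ^d, Z : Ω → ℝ^m, ε : Ω → ℝ be random variables and h : ℝ^m → ℝ measurable, with Z, h(Z), ε square-integrable. Assume ε is independent of the pair (X, Z), E[ε] = 0, and the covariance matrix of Z is the identity: Cov(Z_i, Z_j) = δ_{ij} for all i, j. Let γ ∈ ℝ^m be given by γ_j = Cov(Z_j, h(Z) − E[h(Z) | σ(X)]). Then Var[h(Z) − E[h(Z) | σ(X)] − ⟨γ, Z⟩ + ε] = E[(h(Z) − E[h(Z) | σ(X)])²] − ‖γ‖₂² + Var[ε], where E[· | σ(X)] denotes the conditional expectation with respect to the σ-algebra generated by X. -/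

import Mathlib

open MeasureTheory ProbabilityTheory ENNReal

lemma integrable_mul_of_memL2 {Ω : Type} {mΩ : MeasurableSpace Ω} {P : Measure Ω} {f g : Ω → ℝ}
    (hf : MemLp f 2 P) (hg : MemLp g 2 P) : Integrable (fun ω => f ω * g ω) P := by
  have h1 : (1 : ℝ≥0∞) / 1 = 1 / 2 + 1 / 2 := by
    rw [ENNReal.add_halves, one_div_one]
  have := memLp_one_iff_integrable.mp (hg.smul hf (r := 1))
  exact this

lemma memL2_condexp {Ω : Type} {m0 : MeasurableSpace Ω} (P : Measure Ω) [IsFiniteMeasure P]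
    {m : MeasurableSpace Ω} (hm : m ≤ m0) {f : Ω → ℝ} (hf : MemLp f 2 P) :
    MemLp (P[f|m]) 2 P := by
  have hint : Integrable ((condExpL2 ℝ ℝ (μ := P) hm (hf.toLp f) : Lp ℝ 2 P) : Ω → ℝ) P :=
    (Lp.memLp _).integrable one_le_two
  have hae : ((condExpL2 ℝ ℝ (μ := P) hm (hf.toLp f) : Lp ℝ 2 P) : Ω → ℝ)
      =ᵐ[P] P[f|m] := by
    refine ae_eq_condExp_of_forall_setIntegral_eq hm (hf.integrable one_le_two) ?_ ?_ ?_
    · intro s _ _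
      exact hint.restrict
    · intro s hs hμs
      rw [integral_condExpL2_eq hm (hf.toLp f) hs hμs.ne]
      exact integral_congr_ae (ae_restrict_of_ae hf.coeFn_toLp)
    · exact aestronglyMeasurable_condExpL2 hm _
  exact (Lp.memLp _).ae_eq hae

theorem stmt_11 {Ω : Type} [MeasurableSpace Ω]
    (P : Measure Ω) [IsProbabilityMeasure P]
    {d m : ℕ} (X : Ω → (Fin d → ℝ)) (Z : Ω → (Fin m → ℝ)) (eps : Ω → ℝ)
    (hXm : Measurable X) (hZm : Measurable Z) (hepsm : Measurable eps)
    (h : (Fin m → ℝ) → ℝ) (hh : Measurable h)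
    (hZ2 : ∀ j, MemLp (fun ω => Z ω j) 2 P)
    (hh2 : MemLp (fun ω => h (Z ω)) 2 P)
    (heps2 : MemLp eps 2 P)
    (hepsXZ : IndepFun eps (fun ω => (X ω, Z ω)) P)
    (heps0 : ∫ ω, eps ω ∂P = 0)
    (hZcov : ∀ i j : Fin m,
      (∫ ω, Z ω i * Z ω j ∂P) - (∫ ω, Z ω i ∂P) * (∫ ω, Z ω j ∂P) =
        if i = j then 1 else 0)
    (γ : Fin m → ℝ)
    (hγ : ∀ j, γ j =
      (∫ ω, Z ω j * (h (Z ω) -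
        (P[(fun ω' => h (Z ω')) | MeasurableSpace.comap X inferInstance]) ω) ∂P) -
      (∫ ω, Z ω j ∂P) *
      (∫ ω, (h (Z ω) -
        (P[(fun ω' => h (Z ω')) | MeasurableSpace.comap X inferInstance]) ω) ∂P)) :
    (∫ ω, (h (Z ω) -
        (P[(fun ω' => h (Z ω')) | MeasurableSpace.comap X inferInstance]) ω -
        (∑ j, γ j * Z ω j) + eps ω) ^ 2 ∂P) -
      (∫ ω, (h (Z ω) -
        (P[(fun ω' => h (Z ω')) | MeasurableSpace.comap X inferInstance]) ω -
        (∑ j, γ j * Z ω j) + eps ω) ∂P) ^ 2 =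
    (∫ ω, (h (Z ω) -
        (P[(fun ω' => h (Z ω')) | MeasurableSpace.comap X inferInstance]) ω) ^ 2 ∂P) -
      (∑ j, γ j ^ 2) +
      ((∫ ω, eps ω ^ 2 ∂P) - (∫ ω, eps ω ∂P) ^ 2) := by
  classical
  have hm : MeasurableSpace.comap X inferInstance ≤ ‹MeasurableSpace Ω› := hXm.comap_le
  set Y : Ω → ℝ := P[(fun ω' => h (Z ω')) | MeasurableSpace.comap X inferInstance] with hYdef
  have hY2 : MemLp Y 2 P := memL2_condexp P hm hh2
  have hR2 : MemLp (fun ω => h (Z ω) - Y ω) 2 P := hh2.sub hY2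
  have hL2 : MemLp (fun ω => ∑ j, γ j * Z ω j) 2 P :=
    memLp_finsetSum _ (fun j _ => (hZ2 j).const_mul (γ j))
  have hhI : Integrable (fun ω => h (Z ω)) P := hh2.integrable one_le_two
  have hYI : Integrable Y P := hY2.integrable one_le_two
  have hepsI : Integrable eps P := heps2.integrable one_le_two
  have hZI : ∀ j, Integrable (fun ω => Z ω j) P := fun j => (hZ2 j).integrable one_le_two
  have hLI : Integrable (fun ω => ∑ j, γ j * Z ω j) P :=
    integrable_finsetSum _ (fun j _ => (hZI j).const_mul (γ j))
  -- mean of residual is zero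
  have hER : ∫ ω, (h (Z ω) - Y ω) ∂P = 0 := by
    rw [integral_sub hhI hYI, hYdef, integral_condExp hm, sub_self]
  have hγ' : ∀ j, ∫ ω, Z ω j * (h (Z ω) - Y ω) ∂P = γ j := by
    intro j
    rw [hγ j, hER, mul_zero, sub_zero]
  -- independence consequences
  have hφm : Measurable (fun ω => (X ω, Z ω)) := hXm.prodMk hZm
  have hφ : Measurable[MeasurableSpace.comap (fun ω => (X ω, Z ω)) inferInstance]
      (fun ω => (X ω, Z ω)) := comap_measurable _
  have hXφ : Measurable[MeasurableSpace.comap (fun ω => (X ω, Z ω)) inferInstance] X :=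
    measurable_fst.comp hφ
  have hZφ : Measurable[MeasurableSpace.comap (fun ω => (X ω, Z ω)) inferInstance] Z :=
    measurable_snd.comp hφ
  have hmXφ : MeasurableSpace.comap X inferInstance ≤
      MeasurableSpace.comap (fun ω => (X ω, Z ω)) inferInstance := hXφ.comap_le
  have hmφle : MeasurableSpace.comap (fun ω => (X ω, Z ω)) inferInstance ≤
      ‹MeasurableSpace Ω› := hφm.comap_le
  have hYφ : Measurable[MeasurableSpace.comap (fun ω => (X ω, Z ω)) inferInstance] Y := by
    rw [hYdef]
    exact (stronglyMeasurable_condExp.measurable).mono hmXφ le_rfl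
  have hIndep : Indep (MeasurableSpace.comap eps inferInstance)
      (MeasurableSpace.comap (fun ω => (X ω, Z ω)) inferInstance) P :=
    (ProbabilityTheory.IndepFun_iff_Indep _ _ _).mp hepsXZ
  have key : ∀ (g : Ω → ℝ),
      Measurable[MeasurableSpace.comap (fun ω => (X ω, Z ω)) inferInstance] g →
      ∫ ω, g ω * eps ω ∂P = (∫ ω, g ω ∂P) * ∫ ω, eps ω ∂P := by
    intro g hg
    have hind : IndepFun g eps P := by
      rw [ProbabilityTheory.IndepFun_iff_Indep]
      exact indep_of_indep_of_le_left hIndep.symm hg.comap_le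
    exact hind.integral_fun_mul_eq_mul_integral ((hg.mono hmφle le_rfl).aestronglyMeasurable)
      hepsm.aestronglyMeasurable
  have hRmeas : Measurable[MeasurableSpace.comap (fun ω => (X ω, Z ω)) inferInstance]
      (fun ω => h (Z ω) - Y ω) := (hh.comp hZφ).sub hYφ
  have hZjmeas : ∀ j, Measurable[MeasurableSpace.comap (fun ω => (X ω, Z ω)) inferInstance]
      (fun ω => Z ω j) := fun j => (measurable_pi_apply j).comp hZφ
  have hReps : ∫ ω, (h (Z ω) - Y ω) * eps ω ∂P = 0 := by
    rw [key _ hRmeas, heps0, mul_zero]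
  have hZeps : ∀ j, ∫ ω, Z ω j * eps ω ∂P = 0 := by
    intro j
    rw [key _ (hZjmeas j), heps0, mul_zero]
  -- covariance rearranged
  have hZint : ∀ i j, ∫ ω, Z ω i * Z ω j ∂P =
      (if i = j then (1:ℝ) else 0) + (∫ ω, Z ω i ∂P) * (∫ ω, Z ω j ∂P) := by
    intro i j
    have := hZcov i j
    linarith
  have EL : ∫ ω, (∑ j, γ j * Z ω j) ∂P = ∑ j, γ j * (∫ ω, Z ω j ∂P) := by
    rw [integral_finset_sum _ (fun j _ => (hZI j).const_mul _)]
    exact Finset.sum_congr rfl fun j _ => integral_const_mul _ _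
  have hpt2 : ∀ ω : Ω, (∑ j, γ j * Z ω j)^2 = ∑ i, ∑ j, γ i * γ j * (Z ω i * Z ω j) := by
    intro ω
    rw [sq, Finset.sum_mul_sum]
    exact Finset.sum_congr rfl fun i _ => Finset.sum_congr rfl fun j _ => by ring
  have EZZint : ∀ i j : Fin m, Integrable (fun ω => γ i * γ j * (Z ω i * Z ω j)) P :=
    fun i j => (integrable_mul_of_memL2 (hZ2 i) (hZ2 j)).const_mul _
  have ELL : ∫ ω, (∑ j, γ j * Z ω j)^2 ∂P =
      (∑ j, γ j^2) + (∑ j, γ j * (∫ ω, Z ω j ∂P))^2 := by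
    simp only [hpt2]
    rw [integral_finset_sum _ (fun i _ => integrable_finsetSum _ (fun j _ => EZZint i j))]
    have hinner : ∀ i, ∫ ω, (∑ j, γ i * γ j * (Z ω i * Z ω j)) ∂P
        = ∑ j, γ i * γ j * ((if i = j then (1:ℝ) else 0) +
            (∫ ω, Z ω i ∂P) * (∫ ω, Z ω j ∂P)) := by
      intro i
      rw [integral_finset_sum _ (fun j _ => EZZint i j)]
      exact Finset.sum_congr rfl fun j _ => by rw [integral_const_mul, hZint i j]
    simp only [hinner]
    have hsq : (∑ j, γ j * (∫ ω, Z ω j ∂P))^2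
        = ∑ i, ∑ j, γ i * γ j * ((∫ ω, Z ω i ∂P) * (∫ ω, Z ω j ∂P)) := by
      rw [sq, Finset.sum_mul_sum]
      exact Finset.sum_congr rfl fun i _ => Finset.sum_congr rfl fun j _ => by ring
    rw [hsq]
    simp only [mul_add, Finset.sum_add_distrib]
    congr 1
    simp [mul_ite, mul_one, mul_zero, Finset.sum_ite_eq, sq]
  have hpt3 : ∀ ω : Ω, (h (Z ω) - Y ω) * (∑ j, γ j * Z ω j)
      = ∑ j, γ j * (Z ω j * (h (Z ω) - Y ω)) := by
    intro ω
    rw [Finset.mul_sum]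
    exact Finset.sum_congr rfl fun j _ => by ring
  have ERL : ∫ ω, (h (Z ω) - Y ω) * (∑ j, γ j * Z ω j) ∂P = ∑ j, γ j^2 := by
    simp only [hpt3]
    rw [integral_finset_sum _ (fun j _ => (integrable_mul_of_memL2 (hZ2 j) hR2).const_mul _)]
    exact Finset.sum_congr rfl fun j _ => by rw [integral_const_mul, hγ' j, sq]
  have hpt4 : ∀ ω : Ω, (∑ j, γ j * Z ω j) * eps ω = ∑ j, γ j * (Z ω j * eps ω) := by
    intro ω
    rw [Finset.sum_mul]
    exact Finset.sum_congr rfl fun j _ => by ring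
  have ELe : ∫ ω, (∑ j, γ j * Z ω j) * eps ω ∂P = 0 := by
    simp only [hpt4]
    rw [integral_finset_sum _ (fun j _ => (integrable_mul_of_memL2 (hZ2 j) heps2).const_mul _)]
    exact Finset.sum_eq_zero fun j _ => by rw [integral_const_mul, hZeps j, mul_zero]
  -- expansion of the square
  have hpt : ∀ ω : Ω, (h (Z ω) - Y ω - (∑ j, γ j * Z ω j) + eps ω)^2 =
      (h (Z ω) - Y ω)^2 + (∑ j, γ j * Z ω j)^2 + eps ω^2
      - 2*((h (Z ω) - Y ω) * (∑ j, γ j * Z ω j))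
      + 2*((h (Z ω) - Y ω) * eps ω)
      - 2*((∑ j, γ j * Z ω j) * eps ω) := fun ω => by ring
  have IA := hR2.integrable_sq
  have IB := hL2.integrable_sq
  have IC := heps2.integrable_sq
  have ID := integrable_mul_of_memL2 hR2 hL2
  have IE := integrable_mul_of_memL2 hR2 heps2
  have IFF := integrable_mul_of_memL2 hL2 heps2
  have I1 : Integrable (fun ω => (h (Z ω) - Y ω)^2 + (∑ j, γ j * Z ω j)^2) P := IA.add IB
  have I2 : Integrable (fun ω => (h (Z ω) - Y ω)^2 + (∑ j, γ j * Z ω j)^2 + eps ω^2) P :=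
    I1.add IC
  have I3 : Integrable (fun ω => (h (Z ω) - Y ω)^2 + (∑ j, γ j * Z ω j)^2 + eps ω^2
      - 2*((h (Z ω) - Y ω) * (∑ j, γ j * Z ω j))) P := I2.sub (ID.const_mul 2)
  have I4 : Integrable (fun ω => (h (Z ω) - Y ω)^2 + (∑ j, γ j * Z ω j)^2 + eps ω^2
      - 2*((h (Z ω) - Y ω) * (∑ j, γ j * Z ω j))
      + 2*((h (Z ω) - Y ω) * eps ω)) P := I3.add (IE.const_mul 2)
  have EW2 : ∫ ω, (h (Z ω) - Y ω - (∑ j, γ j * Z ω j) + eps ω)^2 ∂P =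
      (∫ ω, (h (Z ω) - Y ω)^2 ∂P) + ((∑ j, γ j^2) + (∑ j, γ j * (∫ ω, Z ω j ∂P))^2)
      + (∫ ω, eps ω^2 ∂P) - 2*(∑ j, γ j^2) + 2*0 - 2*0 := by
    simp only [hpt]
    rw [integral_sub I4 (IFF.const_mul 2), integral_add I3 (IE.const_mul 2),
      integral_sub I2 (ID.const_mul 2), integral_add I1 IC, integral_add IA IB,
      integral_const_mul, integral_const_mul, integral_const_mul, ELL, ERL, hReps, ELe]
  have EW : ∫ ω, (h (Z ω) - Y ω - (∑ j, γ j * Z ω j) + eps ω) ∂P =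
      -(∑ j, γ j * (∫ ω, Z ω j ∂P)) := by
    have J1 : Integrable (fun ω => h (Z ω) - Y ω) P := hhI.sub hYI
    have J2 : Integrable (fun ω => h (Z ω) - Y ω - ∑ j, γ j * Z ω j) P := J1.sub hLI
    rw [integral_add J2 hepsI, integral_sub J1 hLI, hER, EL, heps0]
    ring
  rw [EW2, EW, heps0]
  ring
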